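/- Let S be a nontrivial commutative entire antinegative semiring. A matrix A ∈ M_2(S) is nilpotent (A^k = 0 for some k ≥ 1) if and only if A = a·E_{1,2} for some a ∈ S or A = a·E_{2,1} for some a ∈ S; equivalently, iff both diagonal entries of A are 0 and at least one off-diagonal entry of A is 0. Moreover, two nonzero nilpotent matrices A, B ∈ M_2(S) commute if and only if they are both strictly upper triangular or both strictly lower triangular. -/

import Mathlib

section Aux
variable {S : Type*} [CommSemiring S]

lemma aux_pow_zero (hentire : ∀ a b : S, a * b = 0 → a = 0 ∨ b = 0) :
    ∀ k (s : S), s ^ (k + 1) = 0 → s = 0 := by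
  intro k
  induction k with
  | zero => intro s h; simpa using h
  | succ n ih =>
    intro s h
    rw [pow_succ] at h
    rcases hentire _ _ h with h' | h'
    · exact ih s h'
    · exact h'

lemma aux_diag_pow0 (A : Matrix (Fin 2) (Fin 2) S) :
    ∀ k, ∃ r, (A ^ (k + 1)) 0 0 = A 0 0 ^ (k + 1) + r := by
  intro k
  induction k with
  | zero => exact ⟨0, by simp⟩
  | succ n ih =>
    obtain ⟨r, hr⟩ := ih
    refine ⟨r * A 0 0 + (A ^ (n + 1)) 0 1 * A 1 0, ?_⟩
    rw [pow_succ, Matrix.mul_apply, Fin.sum_univ_two, hr]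
    ring

lemma aux_diag_pow1 (A : Matrix (Fin 2) (Fin 2) S) :
    ∀ k, ∃ r, (A ^ (k + 1)) 1 1 = A 1 1 ^ (k + 1) + r := by
  intro k
  induction k with
  | zero => exact ⟨0, by simp⟩
  | succ n ih =>
    obtain ⟨r, hr⟩ := ih
    refine ⟨r * A 1 1 + (A ^ (n + 1)) 1 0 * A 0 1, ?_⟩
    rw [pow_succ, Matrix.mul_apply, Fin.sum_univ_two, hr]
    ring

lemma aux_key (hentire : ∀ a b : S, a * b = 0 → a = 0 ∨ b = 0)
    (hanti : ∀ a b : S, a + b = 0 → a = 0 ∧ b = 0)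
    (A : Matrix (Fin 2) (Fin 2) S) :
    (∃ k, 1 ≤ k ∧ A ^ k = 0) ↔
      (A 0 0 = 0 ∧ A 1 1 = 0 ∧ (A 0 1 = 0 ∨ A 1 0 = 0)) := by
  constructor
  · rintro ⟨k, hk, hA⟩
    obtain ⟨m, rfl⟩ := Nat.exists_eq_add_of_le hk
    have hx : A 0 0 = 0 := by
      obtain ⟨r, hr⟩ := aux_diag_pow0 A m
      rw [add_comm] at hA
      rw [hA] at hr
      exact aux_pow_zero hentire m _ (hanti _ _ hr.symm).1
    have hy : A 1 1 = 0 := by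
      obtain ⟨r, hr⟩ := aux_diag_pow1 A m
      rw [add_comm] at hA
      rw [hA] at hr
      exact aux_pow_zero hentire m _ (hanti _ _ hr.symm).1
    refine ⟨hx, hy, ?_⟩
    have hsq : A ^ 2 = (A 0 1 * A 1 0) • (1 : Matrix (Fin 2) (Fin 2) S) := by
      ext i j
      fin_cases i <;> fin_cases j <;>
        simp [pow_two, Matrix.mul_apply, Fin.sum_univ_two, hx, hy, Matrix.one_apply,
          mul_comm]
    have h2 : ((A 0 1 * A 1 0) ^ (m + 1)) • (1 : Matrix (Fin 2) (Fin 2) S) = 0 := by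
      calc ((A 0 1 * A 1 0) ^ (m + 1)) • (1 : Matrix (Fin 2) (Fin 2) S)
          = ((A 0 1 * A 1 0) • (1 : Matrix (Fin 2) (Fin 2) S)) ^ (m + 1) := by
            rw [smul_pow, one_pow]
        _ = (A ^ 2) ^ (m + 1) := by rw [hsq]
        _ = (A ^ (1 + m)) ^ 2 := by rw [← pow_mul, ← pow_mul, Nat.mul_comm, Nat.add_comm]
        _ = 0 := by rw [hA]; simp
    have h3 : (A 0 1 * A 1 0) ^ (m + 1) = 0 := by
      have := congrFun (congrFun h2 0) 0
      simpa using this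
    exact hentire _ _ (aux_pow_zero hentire m _ h3)
  · rintro ⟨hx, hy, h⟩
    refine ⟨2, by norm_num, ?_⟩
    ext i j
    rcases h with h | h <;>
      fin_cases i <;> fin_cases j <;>
        simp [pow_two, Matrix.mul_apply, Fin.sum_univ_two, hx, hy, h]

lemma aux_ne_zero (A : Matrix (Fin 2) (Fin 2) S) (hx : A 0 0 = 0) (hy : A 1 1 = 0)
    (h01 : A 0 1 = 0) (h10 : A 1 0 = 0) : A = 0 := by
  ext i j
  fin_cases i <;> fin_cases j <;> simp [hx, hy, h01, h10]

end Aux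

theorem nilpotent_two_by_two (S : Type*) [CommSemiring S] [Nontrivial S]
    (hentire : ∀ a b : S, a * b = 0 → a = 0 ∨ b = 0)
    (hanti : ∀ a b : S, a + b = 0 → a = 0 ∧ b = 0) :
    (∀ A : Matrix (Fin 2) (Fin 2) S,
        (∃ k, 1 ≤ k ∧ A ^ k = 0) ↔
          ((∃ a : S, A = a • Matrix.single 0 1 (1 : S)) ∨
            (∃ a : S, A = a • Matrix.single 1 0 (1 : S)))) ∧
    (∀ A : Matrix (Fin 2) (Fin 2) S,
        (∃ k, 1 ≤ k ∧ A ^ k = 0) ↔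
          (A 0 0 = 0 ∧ A 1 1 = 0 ∧ (A 0 1 = 0 ∨ A 1 0 = 0))) ∧
    (∀ A B : Matrix (Fin 2) (Fin 2) S, A ≠ 0 → B ≠ 0 →
        (∃ k, 1 ≤ k ∧ A ^ k = 0) → (∃ k, 1 ≤ k ∧ B ^ k = 0) →
        (A * B = B * A ↔
          ((A 0 0 = 0 ∧ A 1 1 = 0 ∧ A 1 0 = 0) ∧ (B 0 0 = 0 ∧ B 1 1 = 0 ∧ B 1 0 = 0)) ∨
            ((A 0 0 = 0 ∧ A 1 1 = 0 ∧ A 0 1 = 0) ∧ (B 0 0 = 0 ∧ B 1 1 = 0 ∧ B 0 1 = 0)))) := by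
  refine ⟨?_, fun A => aux_key hentire hanti A, ?_⟩
  · intro A
    rw [aux_key hentire hanti A]
    constructor
    · rintro ⟨hx, hy, h | h⟩
      · right
        refine ⟨A 1 0, ?_⟩
        ext i j
        fin_cases i <;> fin_cases j <;> simp [hx, hy, h, Matrix.single]
      · left
        refine ⟨A 0 1, ?_⟩
        ext i j
        fin_cases i <;> fin_cases j <;> simp [hx, hy, h, Matrix.single]
    · rintro (⟨a, rfl⟩ | ⟨a, rfl⟩) <;> simp [Matrix.single]
  · intro A B hA0 hB0 hAnil hBnil
    obtain ⟨hxA, hyA, hoA⟩ := (aux_key hentire hanti A).mp hAnil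
    obtain ⟨hxB, hyB, hoB⟩ := (aux_key hentire hanti B).mp hBnil
    constructor
    · intro hcomm
      rcases hoA with hA | hA <;> rcases hoB with hB | hB
      · -- A lower (A 0 1 = 0), B lower
        right; exact ⟨⟨hxA, hyA, hA⟩, ⟨hxB, hyB, hB⟩⟩
      · -- A lower, B upper: contradiction
        exfalso
        have ha : A 1 0 ≠ 0 := fun h => hA0 (aux_ne_zero A hxA hyA hA h)
        have hb : B 0 1 ≠ 0 := fun h => hB0 (aux_ne_zero B hxB hyB h hB)
        have := congrFun (congrFun hcomm 1) 1
        rw [Matrix.mul_apply, Matrix.mul_apply, Fin.sum_univ_two, Fin.sum_univ_two] at this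
        simp only [hxA, hxB, hyA, hyB, hA, hB, mul_zero, zero_mul, add_zero, zero_add] at this
        rcases hentire _ _ this with h | h
        · exact ha h
        · exact hb h
      · -- A upper, B lower: contradiction
        exfalso
        have ha : A 0 1 ≠ 0 := fun h => hA0 (aux_ne_zero A hxA hyA h hA)
        have hb : B 1 0 ≠ 0 := fun h => hB0 (aux_ne_zero B hxB hyB hB h)
        have := congrFun (congrFun hcomm 0) 0
        rw [Matrix.mul_apply, Matrix.mul_apply, Fin.sum_univ_two, Fin.sum_univ_two] at this
        simp only [hxA, hxB, hyA, hyB, hA, hB, mul_zero, zero_mul, add_zero, zero_add] at this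
        rcases hentire _ _ this with h | h
        · exact ha h
        · exact hb h
      · left; exact ⟨⟨hxA, hyA, hA⟩, ⟨hxB, hyB, hB⟩⟩
    · rintro (⟨⟨_, _, hA⟩, ⟨_, _, hB⟩⟩ | ⟨⟨_, _, hA⟩, ⟨_, _, hB⟩⟩) <;>
        ext i j <;> fin_cases i <;> fin_cases j <;>
          simp [Matrix.mul_apply, Fin.sum_univ_two, hxA, hyA, hxB, hyB, hA, hB]
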